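/- Discrete-to-continuous recursion bound: suppose nonnegative reals V_t satisfy V_{t+1} ≤ (1 - aη_t + c₀η_t²)V_t + u·η_t² with η_t = η₀/t, aη₀ > 1, and u ≥ 0. Then there exist constants C₁, C₂ (depending on a, η₀, c₀) such that V_T ≤ C₁·u/T + C₂·V_1·T^{-aη₀} for all T ≥ 2. -/

import Mathlib

/-- Bernoulli-type bound: for `0 < p < s`, `(1 - p/s) * s^(-p) ≤ (s+1)^(-p)`. -/
lemma aux_bern_stmt18 (s p : ℝ) (hp : 0 < p) (hs : p < s) :
    (1 - p / s) * s ^ (-p) ≤ (s + 1) ^ (-p) := by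
  have hs0 : 0 < s := hp.trans hs
  have hs1 : 0 < s + 1 := by linarith
  have h1 : 1 - p / s ≤ Real.exp (-(p / s)) := by
    have := Real.add_one_le_exp (-(p / s)); linarith
  have h2 : (s + 1) ^ p ≤ Real.exp (p / s) * s ^ p := by
    have hlog : Real.log (s + 1) ≤ Real.log s + 1 / s := by
      have h := Real.log_le_sub_one_of_pos (show 0 < (s + 1) / s by positivity)
      rw [Real.log_div (by linarith) (ne_of_gt hs0)] at h
      have he : (s + 1) / s - 1 = 1 / s := by field_simp; ring
      linarith
    calc (s + 1) ^ p = Real.exp (Real.log (s + 1) * p) := Real.rpow_def_of_pos hs1 p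
      _ ≤ Real.exp ((Real.log s + 1 / s) * p) := by
          exact Real.exp_le_exp.2 (mul_le_mul_of_nonneg_right hlog hp.le)
      _ = Real.exp (p / s) * s ^ p := by
          rw [Real.rpow_def_of_pos hs0, ← Real.exp_add]
          ring_nf
  have h3 : (Real.exp (p / s) * s ^ p)⁻¹ ≤ ((s + 1) ^ p)⁻¹ :=
    inv_anti₀ (Real.rpow_pos_of_pos hs1 p) h2
  have hsnp : (0:ℝ) ≤ s ^ (-p) := Real.rpow_nonneg hs0.le _
  calc (1 - p / s) * s ^ (-p) ≤ Real.exp (-(p / s)) * s ^ (-p) :=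
        mul_le_mul_of_nonneg_right h1 hsnp
    _ = (Real.exp (p / s) * s ^ p)⁻¹ := by
        rw [Real.exp_neg, Real.rpow_neg hs0.le, mul_inv]
    _ ≤ ((s + 1) ^ p)⁻¹ := h3
    _ = (s + 1) ^ (-p) := (Real.rpow_neg hs1.le p).symm

set_option maxHeartbeats 1000000 in
/-- discrete recursion bound.  If nonnegative reals `V t` satisfy
`V (t+1) ≤ (1 - a η_t + c₀ η_t²) V t + u η_t²` with `η_t = η₀/t` and `a η₀ > 1`, then
there are constants `C₁, C₂` (depending only on `a, η₀, c₀`) with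
`V T ≤ C₁ u / T + C₂ V 1 T^{-a η₀}` for all `T ≥ 2`. -/
theorem stmt_18 (a η₀ c₀ : ℝ) (ha : 0 < a) (haη : 1 < a * η₀) (hc : 0 ≤ c₀) :
    ∃ C₁ C₂ : ℝ, ∀ (u : ℝ) (V : ℕ → ℝ), 0 ≤ u → (∀ t, 0 ≤ V t) →
      (∀ t : ℕ, 1 ≤ t →
        V (t + 1) ≤ (1 - a * (η₀ / t) + c₀ * (η₀ / t) ^ 2) * V t + u * (η₀ / t) ^ 2) →
      ∀ T : ℕ, 2 ≤ T →
        V T ≤ C₁ * u / T + C₂ * V 1 * (T : ℝ) ^ (-(a * η₀)) := by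
  have hη : 0 < η₀ := by nlinarith
  obtain ⟨α, hαdef⟩ : ∃ x : ℝ, x = a * η₀ := ⟨_, rfl⟩
  have hα : 1 < α := by rw [hαdef]; exact haη
  have hα0 : 0 < α := by linarith
  obtain ⟨c, hcdef⟩ : ∃ x : ℝ, x = c₀ * η₀ ^ 2 := ⟨_, rfl⟩
  have hc0 : 0 ≤ c := by rw [hcdef]; positivity
  obtain ⟨β, hβdef⟩ : ∃ x : ℝ, x = (1 + α) / 2 := ⟨_, rfl⟩
  have hβ1 : 1 < β := by rw [hβdef]; linarith
  have hβα : β < α := by rw [hβdef]; linarith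
  obtain ⟨k, hkdef⟩ : ∃ x : ℕ, x = ⌈c / α⌉₊ + 1 := ⟨_, rfl⟩
  have hk0 : (0:ℝ) ≤ (k:ℝ) := by positivity
  have hkc : c < α * (k:ℝ) := by
    have h1 : c / α ≤ (⌈c / α⌉₊ : ℝ) := Nat.le_ceil _
    have h2 : (⌈c / α⌉₊ : ℝ) < (k:ℝ) := by rw [hkdef]; push_cast; linarith
    have h3 := (div_lt_iff₀ hα0).1 (lt_of_le_of_lt h1 h2)
    exact h3.trans_eq (mul_comm _ _)
  obtain ⟨R, hRdef⟩ : ∃ x : ℝ,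
      x = max (α + 1) (max (c * k / (α * k - c)) (β * k / (α - β))) := ⟨_, rfl⟩
  obtain ⟨T₀, hT₀def⟩ : ∃ x : ℕ, x = ⌈R⌉₊ + 2 := ⟨_, rfl⟩
  have hT₀2 : 2 ≤ T₀ := by omega
  have hT₀R : R ≤ (T₀ : ℝ) := by
    have h1 : R ≤ (⌈R⌉₊:ℝ) := Nat.le_ceil R
    have h2 : ((⌈R⌉₊:ℕ):ℝ) ≤ (T₀:ℝ) := by rw [hT₀def]; push_cast; linarith
    linarith only [h1, h2]
  -- facts for any real s ≥ T₀
  have hsfacts : ∀ s : ℝ, (T₀:ℝ) ≤ s →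
      (α + 1 ≤ s ∧ c * (s + k) ≤ α * k * s ∧ β * (s + k) ≤ α * s) := by
    intro s hs
    have hR1 : α + 1 ≤ R := by rw [hRdef]; exact le_max_left _ _
    have hR2 : c * k / (α * k - c) ≤ R := by
      rw [hRdef]; exact le_trans (le_max_left _ _) (le_max_right _ _)
    have hR3 : β * k / (α - β) ≤ R := by
      rw [hRdef]; exact le_trans (le_max_right _ _) (le_max_right _ _)
    have hRs : R ≤ s := le_trans hT₀R hs
    refine ⟨by linarith only [hR1, hRs], ?_, ?_⟩
    · have hpos : (0:ℝ) < α * k - c := by linarith only [hkc]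
      have h := (div_le_iff₀ hpos).1 (le_trans hR2 hRs)
      linarith only [h]
    · have hpos : (0:ℝ) < α - β := by linarith only [hβα]
      have h := (div_le_iff₀ hpos).1 (le_trans hR3 hRs)
      linarith only [h]
  -- constants
  obtain ⟨D, hDdef⟩ : ∃ x : ℝ, x = (1 + c) ^ T₀ * (1 + (T₀:ℝ) * η₀ ^ 2) := ⟨_, rfl⟩
  have hD0 : 0 ≤ D := by rw [hDdef]; positivity
  obtain ⟨C₁, hC₁def⟩ : ∃ x : ℝ, x = D * T₀ + 2 * η₀ ^ 2 / (α - 1) := ⟨_, rfl⟩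
  have hfrac0 : (0:ℝ) ≤ 2 * η₀ ^ 2 / (α - 1) :=
    div_nonneg (by positivity) (by linarith only [hα])
  have hDT0 : (0:ℝ) ≤ D * T₀ := by positivity
  have hC₁0 : 0 ≤ C₁ := by rw [hC₁def]; linarith only [hfrac0, hDT0]
  have hC₁DT : D * T₀ ≤ C₁ := by rw [hC₁def]; linarith only [hfrac0]
  have hC₁β : η₀ ^ 2 ≤ C₁ * (β - 1) := by
    have hne : α - 1 ≠ 0 := (by linarith only [hα] : (0:ℝ) < α - 1).ne'
    have he : (2 * η₀ ^ 2 / (α - 1)) * (β - 1) = η₀ ^ 2 := by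
      rw [hβdef]; field_simp; ring
    have h1 : (0:ℝ) ≤ D * T₀ * (β - 1) := by
      have hb : (0:ℝ) ≤ β - 1 := by linarith only [hβ1]
      positivity
    rw [hC₁def]; linarith only [h1, he]
  have hTk0 : (0:ℝ) < (T₀:ℝ) + k := by positivity
  obtain ⟨C₂, hC₂def⟩ : ∃ x : ℝ, x = D * ((T₀:ℝ) + k) ^ (α:ℝ) := ⟨_, rfl⟩
  have hC₂0 : 0 ≤ C₂ := by
    rw [hC₂def]; exact mul_nonneg hD0 (Real.rpow_nonneg hTk0.le _)
  refine ⟨C₁, C₂, ?_⟩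
  intro u V hu hV hrec T hT2
  have hV1 := hV 1
  -- crude geometric prefix bound
  have hpre : ∀ t : ℕ, 1 ≤ t → V t ≤ (1 + c) ^ t * (V 1 + t * η₀ ^ 2 * u) := by
    intro t ht
    induction t, ht using Nat.le_induction with
    | base =>
      push_cast
      linarith only [hV1, mul_nonneg hc0 hV1, mul_nonneg (sq_nonneg η₀) hu,
        mul_nonneg hc0 (mul_nonneg (sq_nonneg η₀) hu)]
    | succ n hn ih =>
      have hn0 : (1:ℝ) ≤ (n:ℝ) := by exact_mod_cast hn
      have hn0' : (0:ℝ) < (n:ℝ) := by linarith only [hn0]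
      have hn2 : (1:ℝ) ≤ (n:ℝ) ^ 2 := by
        linarith only [hn0, sq_nonneg ((n:ℝ) - 1)]
      have hd : η₀ ^ 2 / (n:ℝ) ^ 2 ≤ η₀ ^ 2 := by
        rw [div_le_iff₀ (by positivity)]
        exact le_mul_of_one_le_right (sq_nonneg η₀) hn2
      have hq_le : 1 - a * (η₀ / n) + c₀ * (η₀ / n) ^ 2 ≤ 1 + c := by
        have h1 : 0 ≤ a * (η₀ / (n:ℝ)) := by positivity
        have h2 : c₀ * (η₀ / (n:ℝ)) ^ 2 ≤ c := by
          rw [hcdef, div_pow]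
          exact mul_le_mul_of_nonneg_left hd hc
        linarith only [h1, h2]
      have hu2 : u * (η₀ / (n:ℝ)) ^ 2 ≤ η₀ ^ 2 * u := by
        rw [div_pow]
        have := mul_le_mul_of_nonneg_left hd hu
        linarith only [this]
      have step : V (n + 1) ≤ (1 + c) * V n + η₀ ^ 2 * u := by
        have hco : (1 - a * (η₀ / n) + c₀ * (η₀ / n) ^ 2) * V n ≤ (1 + c) * V n :=
          mul_le_mul_of_nonneg_right hq_le (hV n)
        have hr := hrec n hn
        linarith only [hco, hu2, hr]
      have hpow1 : (1:ℝ) ≤ (1 + c) ^ (n + 1) := one_le_pow₀ (by linarith only [hc0])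
      have hmul := mul_le_mul_of_nonneg_left ih (by linarith only [hc0] : (0:ℝ) ≤ 1 + c)
      have hlast : (1 + c) ^ (n + 1) * (V 1 + (n:ℝ) * η₀ ^ 2 * u) + η₀ ^ 2 * u ≤
          (1 + c) ^ (n + 1) * (V 1 + ((n:ℝ) + 1) * η₀ ^ 2 * u) := by
        linarith only [mul_nonneg (mul_nonneg (sq_nonneg η₀) hu)
          (sub_nonneg.2 hpow1)]
      calc V (n + 1) ≤ (1 + c) * V n + η₀ ^ 2 * u := step
        _ ≤ (1 + c) * ((1 + c) ^ n * (V 1 + n * η₀ ^ 2 * u)) + η₀ ^ 2 * u := by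
            linarith only [hmul]
        _ = (1 + c) ^ (n + 1) * (V 1 + (n:ℝ) * η₀ ^ 2 * u) + η₀ ^ 2 * u := by ring
        _ ≤ (1 + c) ^ (n + 1) * (V 1 + ((n:ℝ) + 1) * η₀ ^ 2 * u) := hlast
        _ = (1 + c) ^ (n + 1) * (V 1 + ((n + 1 : ℕ):ℝ) * η₀ ^ 2 * u) := by push_cast; ring
  -- bound for all 1 ≤ t ≤ T₀
  have hDbound : ∀ t : ℕ, 1 ≤ t → t ≤ T₀ → V t ≤ D * (V 1 + u) := by
    intro t ht htT
    have h1 := hpre t ht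
    have htT' : ((t:ℕ):ℝ) ≤ (T₀:ℝ) := by exact_mod_cast htT
    have hpow : (1 + c) ^ t ≤ (1 + c) ^ T₀ :=
      pow_le_pow_right₀ (by linarith only [hc0]) htT
    have hpow0' : (0:ℝ) ≤ (1 + c) ^ T₀ := by positivity
    have hin : 0 ≤ V 1 + (t:ℝ) * η₀ ^ 2 * u := by
      have h2' : (0:ℝ) ≤ (t:ℝ) * η₀ ^ 2 * u := by positivity
      linarith only [hV1, h2']
    have hin2 : V 1 + (t:ℝ) * η₀ ^ 2 * u ≤ V 1 + (T₀:ℝ) * η₀ ^ 2 * u := by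
      linarith only [mul_le_mul_of_nonneg_right htT' (mul_nonneg (sq_nonneg η₀) hu)]
    have h2 : (1 + c) ^ t * (V 1 + (t:ℝ) * η₀ ^ 2 * u) ≤
        (1 + c) ^ T₀ * (V 1 + (T₀:ℝ) * η₀ ^ 2 * u) :=
      mul_le_mul hpow hin2 hin hpow0'
    have h3 : (1 + c) ^ T₀ * (V 1 + (T₀:ℝ) * η₀ ^ 2 * u) ≤ D * (V 1 + u) := by
      rw [hDdef]
      have e1 : (0:ℝ) ≤ (T₀:ℝ) * η₀ ^ 2 := by positivity
      have hAB : V 1 + (T₀:ℝ) * η₀ ^ 2 * u ≤ (1 + (T₀:ℝ) * η₀ ^ 2) * (V 1 + u) := by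
        linarith only [hu, mul_nonneg e1 hV1]
      calc (1 + c) ^ T₀ * (V 1 + (T₀:ℝ) * η₀ ^ 2 * u)
          ≤ (1 + c) ^ T₀ * ((1 + (T₀:ℝ) * η₀ ^ 2) * (V 1 + u)) :=
            mul_le_mul_of_nonneg_left hAB hpow0'
        _ = (1 + c) ^ T₀ * (1 + (T₀:ℝ) * η₀ ^ 2) * (V 1 + u) := by ring
    linarith only [h1, h2, h3]
  -- main induction for t ≥ T₀
  have hmain : ∀ t : ℕ, T₀ ≤ t →
      V t ≤ C₁ * u / t + C₂ * V 1 * ((t:ℝ) + k) ^ (-α) := by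
    intro t ht
    induction t, ht using Nat.le_induction with
    | base =>
      have hVT₀ := hDbound T₀ (by omega) le_rfl
      have hrw : C₂ * V 1 * ((T₀:ℝ) + k) ^ (-α) = D * V 1 := by
        rw [hC₂def]
        rw [mul_assoc, mul_comm (V 1), ← mul_assoc, mul_assoc D]
        rw [← Real.rpow_add hTk0]
        simp
      have hT₀0 : (0:ℝ) < (T₀:ℝ) := by positivity
      have hDu : D * u ≤ C₁ * u / (T₀:ℝ) := by
        rw [le_div_iff₀ hT₀0]
        linarith only [mul_le_mul_of_nonneg_right hC₁DT hu]
      rw [hrw]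
      linarith only [hVT₀, hDu]
    | succ n hn ih =>
      have hn1 : 1 ≤ n := by omega
      have hs : (T₀:ℝ) ≤ (n:ℝ) := by exact_mod_cast hn
      obtain ⟨hsα, hsii, hsiii⟩ := hsfacts (n:ℝ) hs
      have hs0 : (0:ℝ) < (n:ℝ) := by linarith only [hsα, hα0]
      have hs2 : (2:ℝ) ≤ (n:ℝ) := by linarith only [hsα, hα]
      have hsk : (0:ℝ) < (n:ℝ) + k := by positivity
      have hαsk : α < (n:ℝ) + k := by linarith only [hsα, hk0]
      -- rewrite the recursion coefficient
      have he1 : a * (η₀ / (n:ℝ)) = α / (n:ℝ) := by rw [hαdef]; ring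
      have he2 : c₀ * (η₀ / (n:ℝ)) ^ 2 = c / (n:ℝ) ^ 2 := by
        rw [hcdef, div_pow]; ring
      have he3 : u * (η₀ / (n:ℝ)) ^ 2 = u * (η₀ ^ 2 / (n:ℝ) ^ 2) := by
        rw [div_pow]
      have hVn1 : V (n + 1) ≤ (1 - α / n + c / (n:ℝ) ^ 2) * V n + u * (η₀ ^ 2 / (n:ℝ) ^ 2) := by
        have hr := hrec n hn1
        rw [he1, he2, he3] at hr
        exact hr
      have hq0 : 0 ≤ 1 - α / n + c / (n:ℝ) ^ 2 := by
        have h1 : α / (n:ℝ) ≤ 1 := by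
          rw [div_le_one hs0]; linarith only [hsα]
        have h2 : (0:ℝ) ≤ c / (n:ℝ) ^ 2 := by positivity
        linarith only [h1, h2]
      have hq1 : 1 - α / n + c / (n:ℝ) ^ 2 ≤ 1 - α / ((n:ℝ) + k) := by
        have h : c / (n:ℝ) ^ 2 ≤ α * k / ((n:ℝ) * ((n:ℝ) + k)) := by
          rw [div_le_div_iff₀ (by positivity) (by positivity)]
          linarith only [mul_le_mul_of_nonneg_right hsii hs0.le]
        have h2 : α * (k:ℝ) / ((n:ℝ) * ((n:ℝ) + k)) = α / (n:ℝ) - α / ((n:ℝ) + k) := by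
          field_simp
          ring
        linarith only [h, h2.le, h2.ge]
      have hqβ : 1 - α / n + c / (n:ℝ) ^ 2 ≤ 1 - β / (n:ℝ) := by
        have h : β / (n:ℝ) ≤ α / ((n:ℝ) + k) := by
          rw [div_le_div_iff₀ hs0 hsk]
          exact hsiii
        linarith only [h, hq1]
      -- part A: the u-term
      have hA : (1 - α / n + c / (n:ℝ) ^ 2) * (C₁ / n) + η₀ ^ 2 / (n:ℝ) ^ 2 ≤
          C₁ / ((n:ℝ) + 1) := by
        have h1 : (1 - α / n + c / (n:ℝ) ^ 2) * (C₁ / n) ≤ (1 - β / (n:ℝ)) * (C₁ / n) :=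
          mul_le_mul_of_nonneg_right hqβ (by positivity)
        have h2 : (1 - β / (n:ℝ)) * (C₁ / n) + η₀ ^ 2 / (n:ℝ) ^ 2 ≤ C₁ / ((n:ℝ) + 1) := by
          have he : (1 - β / (n:ℝ)) * (C₁ / n) + η₀ ^ 2 / (n:ℝ) ^ 2 =
              (((n:ℝ) - β) * C₁ + η₀ ^ 2) / (n:ℝ) ^ 2 := by
            field_simp
          rw [he, div_le_div_iff₀ (by positivity) (by positivity)]
          have H1 := mul_le_mul_of_nonneg_right hC₁β hs0.le
          have H2 : η₀ ^ 2 ≤ C₁ * β := by linarith only [hC₁β, hC₁0]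
          linarith only [H1, H2]
        linarith only [h1, h2]
      -- part B: the decay term
      have hB : (1 - α / n + c / (n:ℝ) ^ 2) * (((n:ℝ) + k) ^ (-α)) ≤
          (((n:ℝ) + 1) + k) ^ (-α) := by
        have hb := aux_bern_stmt18 ((n:ℝ) + k) α hα0 hαsk
        have hq' : (1 - α / n + c / (n:ℝ) ^ 2) * (((n:ℝ) + k) ^ (-α)) ≤
            (1 - α / ((n:ℝ) + k)) * (((n:ℝ) + k) ^ (-α)) :=
          mul_le_mul_of_nonneg_right hq1 (Real.rpow_nonneg hsk.le _)
        have he : ((n:ℝ) + k + 1) = ((n:ℝ) + 1) + k := by ring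
        rw [← he]
        linarith only [hq', hb]
      -- combine
      have hCV : 0 ≤ C₂ * V 1 := mul_nonneg hC₂0 hV1
      have step1 : V (n + 1) ≤
          (1 - α / n + c / (n:ℝ) ^ 2) * (C₁ * u / n + C₂ * V 1 * ((n:ℝ) + k) ^ (-α))
            + u * (η₀ ^ 2 / (n:ℝ) ^ 2) := by
        have hm := mul_le_mul_of_nonneg_left ih hq0
        linarith only [hm, hVn1]
      have stepA : (1 - α / n + c / (n:ℝ) ^ 2) * (C₁ * u / n) + u * (η₀ ^ 2 / (n:ℝ) ^ 2) ≤
          C₁ * u / ((n:ℝ) + 1) := by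
        have hm := mul_le_mul_of_nonneg_right hA hu
        have e1 : ((1 - α / n + c / (n:ℝ) ^ 2) * (C₁ / n) + η₀ ^ 2 / (n:ℝ) ^ 2) * u =
            (1 - α / n + c / (n:ℝ) ^ 2) * (C₁ * u / n) + u * (η₀ ^ 2 / (n:ℝ) ^ 2) := by ring
        have e2 : C₁ / ((n:ℝ) + 1) * u = C₁ * u / ((n:ℝ) + 1) := by ring
        rw [e1, e2] at hm
        exact hm
      have stepB : (1 - α / n + c / (n:ℝ) ^ 2) * (C₂ * V 1 * ((n:ℝ) + k) ^ (-α)) ≤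
          C₂ * V 1 * (((n:ℝ) + 1) + k) ^ (-α) := by
        have hm := mul_le_mul_of_nonneg_left hB hCV
        have e1 : C₂ * V 1 * ((1 - α / n + c / (n:ℝ) ^ 2) * (((n:ℝ) + k) ^ (-α))) =
            (1 - α / n + c / (n:ℝ) ^ 2) * (C₂ * V 1 * ((n:ℝ) + k) ^ (-α)) := by ring
        rw [e1] at hm
        exact hm
      have hfin : V (n + 1) ≤ C₁ * u / ((n:ℝ) + 1) + C₂ * V 1 * (((n:ℝ) + 1) + k) ^ (-α) := by
        linarith only [step1, stepA, stepB]
      have ecast : ((n + 1 : ℕ):ℝ) = (n:ℝ) + 1 := by push_cast; ring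
      rw [ecast]
      exact hfin
  -- final assembly
  rw [← hαdef]
  have hT0 : (0:ℝ) < (T:ℝ) := by
    have : (0:ℕ) < T := by omega
    exact_mod_cast this
  by_cases hT : T₀ ≤ T
  · have h1 := hmain T hT
    have hmon : ((T:ℝ) + k) ^ (-α) ≤ (T:ℝ) ^ (-α) :=
      Real.rpow_le_rpow_of_nonpos hT0 (by linarith only [hk0]) (by linarith only [hα0])
    have hCV : 0 ≤ C₂ * V 1 := mul_nonneg hC₂0 hV1
    have h2 : C₂ * V 1 * ((T:ℝ) + k) ^ (-α) ≤ C₂ * V 1 * (T:ℝ) ^ (-α) :=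
      mul_le_mul_of_nonneg_left hmon hCV
    linarith only [h1, h2]
  · push_neg at hT
    have hVT := hDbound T (by omega) (by omega)
    have hTT₀ : (T:ℝ) ≤ (T₀:ℝ) := by
      have : T ≤ T₀ := by omega
      exact_mod_cast this
    have hDu : D * u ≤ C₁ * u / (T:ℝ) := by
      rw [le_div_iff₀ hT0]
      have h1 : D * (T:ℝ) ≤ C₁ := by
        have hm := mul_le_mul_of_nonneg_left hTT₀ hD0
        linarith only [hm, hC₁DT]
      linarith only [mul_le_mul_of_nonneg_right h1 hu]
    have hTα : (T:ℝ) ^ (α:ℝ) ≤ ((T₀:ℝ) + k) ^ (α:ℝ) :=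
      Real.rpow_le_rpow hT0.le (by linarith only [hTT₀, hk0]) hα0.le
    have hTinv : (0:ℝ) ≤ (T:ℝ) ^ (-α) := Real.rpow_nonneg hT0.le _
    have eT : (T:ℝ) ^ (α:ℝ) * (T:ℝ) ^ (-α) = 1 := by
      rw [← Real.rpow_add hT0]
      simp
    have hDV : D ≤ C₂ * (T:ℝ) ^ (-α) := by
      calc D = D * ((T:ℝ) ^ (α:ℝ) * (T:ℝ) ^ (-α)) := by rw [eT]; ring
        _ ≤ D * (((T₀:ℝ) + k) ^ (α:ℝ) * (T:ℝ) ^ (-α)) :=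
            mul_le_mul_of_nonneg_left (mul_le_mul_of_nonneg_right hTα hTinv) hD0
        _ = C₂ * (T:ℝ) ^ (-α) := by rw [hC₂def]; ring
    have hDV1 : D * V 1 ≤ C₂ * V 1 * (T:ℝ) ^ (-α) := by
      have hm := mul_le_mul_of_nonneg_right hDV hV1
      linarith only [hm]
    linarith only [hVT, hDu, hDV1]
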